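/- The map $(t^1,\dots,t^5) \mapsto (y^1,\dots,y^5)$ given by $y^1 = t^1$, $y^2 = t^2 + \frac{(t^1)^2}{4}$, $y^3 = t^3 + \frac{(t^1)^3}{108} + \frac{t^1 t^2}{6}$, $y^4 = t^4 t^5$, $y^5 = (t^5)^4$ transforms the bilinear form $\eta^{ij} = \partial g_{(5)}^{ij}/\partial y^3$ into a constant matrix, where $g_{(5)}$ is the symmetric matrix with entries $g^{11}=4y^1$, $g^{12}=8y^2$, $g^{13}=12y^3$, $g^{14}=16y^4$, $g^{15}=20y^5$, $g^{22}=4y^1y^2+12y^3$, $g^{23}=8y^1y^3+16y^4$, $g^{24}=12y^1y^4+20y^5$, $g^{25}=16y^1y^5$, $g^{33}=4y^2y^3+12y^1y^4+20y^5$, $g^{34}=8y^2y^4+16y^1y^5$, $g^{35}=12y^2y^5$, $g^{44}=4y^3y^4+12y^2y^5$, $g^{45}=8y^3y^5$, $g^{55}=4y^4y^5$. -/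

import Mathlib

/-- Partial derivative in the `i`-th coordinate direction. -/
noncomputable def pd {n : ℕ} (i : Fin n) (f : (Fin n → ℝ) → ℝ) : (Fin n → ℝ) → ℝ :=
  fun x => fderiv ℝ f x (Pi.single i 1)

/-- The explicit `B_5` orbit-space metric `g_{(5)}` in the coordinates `y^1, …, y^5`
(`y i` stands for `y^{i+1}`). -/
noncomputable def g5 (y : Fin 5 → ℝ) : Matrix (Fin 5) (Fin 5) ℝ :=
  !![4*y 0,  8*y 1,            12*y 2,                      16*y 3,                20*y 4;
     8*y 1,  4*y 0*y 1+12*y 2, 8*y 0*y 2+16*y 3,            12*y 0*y 3+20*y 4,     16*y 0*y 4;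
     12*y 2, 8*y 0*y 2+16*y 3, 4*y 1*y 2+12*y 0*y 3+20*y 4, 8*y 1*y 3+16*y 0*y 4,  12*y 1*y 4;
     16*y 3, 12*y 0*y 3+20*y 4, 8*y 1*y 3+16*y 0*y 4,       4*y 2*y 3+12*y 1*y 4,  8*y 2*y 4;
     20*y 4, 16*y 0*y 4,        12*y 1*y 4,                 8*y 2*y 4,             4*y 3*y 4]

/-- `η^{ij} = ∂g_{(5)}^{ij}/∂y^3`. -/
noncomputable def eta5 (y : Fin 5 → ℝ) : Matrix (Fin 5) (Fin 5) ℝ :=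
  fun i j => fderiv ℝ (fun z : Fin 5 → ℝ => g5 z i j) y (Pi.single 2 1)

/-- The change of coordinates `t ↦ y` of the `B_{3,5}` structure:
`y^1 = t^1`, `y^2 = t^2 + (t^1)²/4`, `y^3 = t^3 + (t^1)³/108 + t^1 t^2/6`,
`y^4 = t^4 t^5`, `y^5 = (t^5)⁴`. -/
noncomputable def phi5 (t : Fin 5 → ℝ) : Fin 5 → ℝ :=
  ![t 0, t 1 + (t 0) ^ 2 / 4, t 2 + (t 0) ^ 3 / 108 + t 0 * t 1 / 6,
    t 3 * t 4, (t 4) ^ 4]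

/-- Jacobian matrix `J_{iα} = ∂y^i/∂t^α` of `phi5`. -/
noncomputable def J5 (t : Fin 5 → ℝ) : Matrix (Fin 5) (Fin 5) ℝ :=
  fun i a => fderiv ℝ (fun s : Fin 5 → ℝ => phi5 s i) t (Pi.single a 1)

lemma fderiv_coord (i a : Fin 5) (y : Fin 5 → ℝ) :
    fderiv ℝ (fun z : Fin 5 → ℝ => z i) y (Pi.single a 1) = if i = a then 1 else 0 := by
  have h : fderiv ℝ (fun z : Fin 5 → ℝ => z i) y = ContinuousLinearMap.proj i :=
    (ContinuousLinearMap.proj i : (Fin 5 → ℝ) →L[ℝ] ℝ).fderiv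
  rw [h]; simp [Pi.single_apply]

set_option maxHeartbeats 4000000 in
lemma eta5_eq (y : Fin 5 → ℝ) :
    eta5 y = !![0,0,12,0,0; 0,12,8*y 0,0,0; 12,8*y 0,4*y 1,0,0;
                0,0,0,4*y 3,8*y 4; 0,0,0,8*y 4,0] := by
  ext i j
  fin_cases i <;> fin_cases j <;>
  · simp only [eta5, g5, Fin.isValue, Matrix.of_apply, Matrix.cons_val_zero,
      Matrix.cons_val_one, Matrix.cons_val_two, Matrix.cons_val_three, Matrix.cons_val_four,
      Matrix.head_cons, Matrix.tail_cons, Matrix.head_fin_const]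
    simp (disch := fun_prop) [fderiv_fun_add, fderiv_fun_mul, fderiv_const_mul, fderiv_coord, Matrix.vecHead, Matrix.vecTail]
    try ring_nf

set_option maxHeartbeats 4000000 in
lemma J5_eq (t : Fin 5 → ℝ) :
    J5 t = !![1,0,0,0,0;
              t 0/2,1,0,0,0;
              t 0^2/36 + t 1/6, t 0/6, 1, 0, 0;
              0,0,0, t 4, t 3;
              0,0,0,0, 4*t 4^3] := by
  ext i a
  fin_cases i <;> fin_cases a <;>
  · simp only [J5, phi5, Fin.isValue, Matrix.of_apply, Matrix.cons_val_zero,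
      Matrix.cons_val_one, Matrix.cons_val_two, Matrix.cons_val_three, Matrix.cons_val_four,
      Matrix.head_cons, Matrix.tail_cons, Matrix.head_fin_const]
    simp only [div_eq_inv_mul, show (4:ℕ) = 1+1+1+1 from rfl,
      show (3:ℕ) = 1+1+1 from rfl, show (2:ℕ) = 1+1 from rfl, pow_succ, pow_one]
    simp (disch := fun_prop) [fderiv_fun_add, fderiv_fun_mul, fderiv_const_mul, fderiv_coord, Matrix.vecHead, Matrix.vecTail]
    try ring_nf

/-- Explicit inverse of the Jacobian. -/
noncomputable def K5 (t : Fin 5 → ℝ) : Matrix (Fin 5) (Fin 5) ℝ :=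
  !![1,0,0,0,0;
     -t 0/2,1,0,0,0;
     t 0^2/18 - t 1/6, -t 0/6, 1, 0, 0;
     0,0,0, 1/t 4, -t 3/(4*t 4^4);
     0,0,0,0, 1/(4*t 4^3)]

set_option maxHeartbeats 4000000 in
lemma J5_inv (t : Fin 5 → ℝ) (ht : t 4 ≠ 0) : (J5 t)⁻¹ = K5 t := by
  apply Matrix.inv_eq_right_inv
  rw [J5_eq]
  ext i j
  fin_cases i <;> fin_cases j <;>
  · simp only [K5, Matrix.mul_apply, Fin.sum_univ_five, Fin.isValue, Matrix.of_apply,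
      Matrix.cons_val_zero, Matrix.cons_val_one, Matrix.cons_val_two, Matrix.cons_val_three,
      Matrix.cons_val_four, Matrix.head_cons, Matrix.tail_cons, Matrix.head_fin_const,
      Matrix.one_apply, Fin.reduceFinMk, Matrix.cons_val]
    norm_num [Fin.ext_iff]
    try field_simp
    try ring

set_option maxHeartbeats 4000000 in
/-- The listed coordinates are flat for `η`: the pullback
`η̃^{αβ} = ∑_{i,j} (∂t^α/∂y^i)(∂t^β/∂y^j) η^{ij}` (with `∂t/∂y = J⁻¹`) is a constant
matrix on the locus `t^5 ≠ 0`. -/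
theorem stmt12 :
    ∃ c : Matrix (Fin 5) (Fin 5) ℝ, ∀ t : Fin 5 → ℝ, t 4 ≠ 0 →
      (J5 t)⁻¹ * eta5 (phi5 t) * ((J5 t)⁻¹).transpose = c := by
  refine ⟨!![0,0,12,0,0; 0,12,0,0,0; 12,0,0,0,0; 0,0,0,0,2; 0,0,0,2,0], fun t ht => ?_⟩
  rw [J5_inv t ht, eta5_eq]
  ext i j
  fin_cases i <;> fin_cases j <;>
  · simp only [K5, phi5, Matrix.mul_apply, Matrix.transpose_apply, Fin.sum_univ_five,
      Fin.isValue, Matrix.of_apply, Matrix.cons_val_zero, Matrix.cons_val_one,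
      Matrix.cons_val_two, Matrix.cons_val_three, Matrix.cons_val_four,
      Matrix.head_cons, Matrix.tail_cons, Matrix.head_fin_const, Fin.reduceFinMk, Matrix.cons_val]
    try field_simp
    try ring
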